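/- For n ≥ 1, the map sending w = w_1···w_{2n} ∈ A_{2n}(4312) to the permutation τ = (2n+1-w_1)(2n+1)(2n+1-w_2)···(2n+1-w_{2n}) is a bijection from A_{2n}(4312) onto the set of u ∈ A_{2n+1}(1243) with u_2 = 2n+1 and u_1 > u_3. -/

import Mathlib

/-- `u` is a permutation of `{1,...,m}`, given as the word `u 0, u 1, ..., u (m-1)`. -/
def IsPermOn (m : ℕ) (u : Fin m → ℕ) : Prop :=
  Function.Injective u ∧ ∀ i, u i ∈ Finset.Icc 1 m

/-- up-down (alternating): u 0 < u 1 > u 2 < u 3 > ... -/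
def UpDown (m : ℕ) (u : Fin m → ℕ) : Prop :=
  ∀ i : ℕ, ∀ h : i + 1 < m,
    (i % 2 = 0 → u ⟨i, by omega⟩ < u ⟨i + 1, h⟩) ∧
    (i % 2 = 1 → u ⟨i + 1, h⟩ < u ⟨i, by omega⟩)

/-- down-up: u 0 > u 1 < u 2 > u 3 < ... -/
def DownUp (m : ℕ) (u : Fin m → ℕ) : Prop :=
  ∀ i : ℕ, ∀ h : i + 1 < m,
    (i % 2 = 0 → u ⟨i + 1, h⟩ < u ⟨i, by omega⟩) ∧
    (i % 2 = 1 → u ⟨i, by omega⟩ < u ⟨i + 1, h⟩)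

/-- `u` contains the pattern `σ`. -/
def Contains {m k : ℕ} (u : Fin m → ℕ) (σ : Fin k → ℕ) : Prop :=
  ∃ g : Fin k → Fin m, StrictMono g ∧ ∀ a b : Fin k, u (g a) < u (g b) ↔ σ a < σ b

def Avoids {m k : ℕ} (u : Fin m → ℕ) (σ : Fin k → ℕ) : Prop := ¬ Contains u σ

/-- The set `A_m(σ)` of σ-avoiding up-down alternating permutations of `{1,...,m}`. -/
def AvoidSet (m : ℕ) {k : ℕ} (σ : Fin k → ℕ) : Set (Fin m → ℕ) :=
  {u | IsPermOn m u ∧ UpDown m u ∧ Avoids u σ}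

def p1234 : Fin 4 → ℕ := ![1, 2, 3, 4]
def p1243 : Fin 4 → ℕ := ![1, 2, 4, 3]
def p2143 : Fin 4 → ℕ := ![2, 1, 4, 3]
def p4312 : Fin 4 → ℕ := ![4, 3, 1, 2]
def p3412 : Fin 4 → ℕ := ![3, 4, 1, 2]

/-- `f(u)`: max over 0 and the smaller entries of 21-patterns of `u`. -/
noncomputable def fval {m : ℕ} (u : Fin m → ℕ) : ℕ :=
  sSup ({0} ∪ {x | ∃ i j : Fin m, i < j ∧ u j < u i ∧ x = u j})

/-- `e(u)`: max over 0 and the smallest entries of 132-patterns of `u`. -/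
noncomputable def eval' {m : ℕ} (u : Fin m → ℕ) : ℕ :=
  sSup ({0} ∪ {x | ∃ i j k : Fin m, i < j ∧ j < k ∧ u i < u k ∧ u k < u j ∧ x = u i})

/-- `g(u)`: min over m+1 and the largest entries of 312-patterns of `u`. -/
noncomputable def gval {m : ℕ} (u : Fin m → ℕ) : ℕ :=
  sInf ({m + 1} ∪ {x | ∃ i j k : Fin m, i < j ∧ j < k ∧ u j < u k ∧ u k < u i ∧ x = u i})

/-- `h(u)`: min over m+1 and the larger entries of 12-patterns of `u`. -/
noncomputable def hval {m : ℕ} (u : Fin m → ℕ) : ℕ :=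
  sInf ({m + 1} ∪ {x | ∃ i j : Fin m, i < j ∧ u i < u j ∧ x = u j})

/-- the operation `v ↦ u`: prepend `v`, increasing every entry `≥ v` by 1. -/
def ins {m : ℕ} (v : ℕ) (u : Fin m → ℕ) : Fin (m + 1) → ℕ :=
  Fin.cases v (fun j => if u j < v then u j else u j + 1)

/-- standardization of a word with distinct entries. -/
def stWord {k : ℕ} (r : Fin k → ℕ) : Fin k → ℕ :=
  fun j => (Finset.univ.filter (fun i => r i ≤ r j)).card

set_option maxHeartbeats 1000000

lemma compl_pattern : ∀ a b : Fin 4, p1243 a < p1243 b ↔ p4312 b < p4312 a := by decide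

lemma transfer (M : ℕ) (hM : 2 ≤ M) (w : Fin M → ℕ) (u : Fin (M+1) → ℕ)
    (hw : ∀ j, 1 ≤ w j ∧ w j ≤ M)
    (hrel : ∀ j : Fin M, u ⟨if (j:ℕ) = 0 then 0 else (j:ℕ)+1, by have := j.isLt; split <;> omega⟩
        = M + 1 - w j)
    (hu1 : u ⟨1, by omega⟩ = M + 1) :
    Contains u p1243 ↔ Contains w p4312 := by
  constructor
  · rintro ⟨g, hg, hiff⟩
    have hg1 : ∀ a : Fin 4, (g a : ℕ) ≠ 1 := by
      intro a ha
      by_cases h2 : a = 2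
      · subst h2
        have h01 : g 0 < g 1 := hg (by decide)
        have h12 : g 1 < g 2 := hg (by decide)
        rw [Fin.lt_def] at h01 h12
        omega
      · have hlt : p1243 a < p1243 2 := by fin_cases a <;> simp_all <;> decide
        have := (hiff a 2).mpr hlt
        have hga : u (g a) = M + 1 := by
          have : g a = ⟨1, by omega⟩ := Fin.ext ha
          rw [this, hu1]
        have hg2 : (g 2 : ℕ) ≠ 1 := by
          intro hb
          have : g a = g 2 := Fin.ext (by omega)
          exact h2 (hg.injective this)
        set j2 : Fin M := ⟨if (g 2 : ℕ) = 0 then 0 else (g 2 : ℕ) - 1, by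
            have := (g 2).isLt; split <;> omega⟩ with hj2
        have hidx : g 2 = ⟨if (j2:ℕ) = 0 then 0 else (j2:ℕ)+1, by
            have := j2.isLt; split <;> omega⟩ := by
          apply Fin.ext
          simp only [hj2]
          split_ifs <;> omega
        have hval : u (g 2) ≤ M := by
          rw [hidx]
          have := hrel j2
          have hb := hw j2
          omega
        omega
    have hjlt : ∀ a : Fin 4, (if (g a : ℕ) = 0 then 0 else (g a : ℕ) - 1) < M := by
      intro a; have := (g a).isLt; split <;> omega
    set jf : Fin 4 → Fin M := fun a => ⟨if (g a : ℕ) = 0 then 0 else (g a : ℕ) - 1, hjlt a⟩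
      with hjf
    have key : ∀ a : Fin 4, u (g a) = M + 1 - w (jf a) := by
      intro a
      have hidx : g a = ⟨if (jf a:ℕ) = 0 then 0 else (jf a:ℕ)+1, by
          have := (jf a).isLt; split <;> omega⟩ := by
        apply Fin.ext
        have := hg1 a
        simp only [hjf]
        split_ifs <;> omega
      rw [hidx]
      exact hrel (jf a)
    refine ⟨jf, ?_, ?_⟩
    · intro a b hab
      have hab' := hg hab
      rw [Fin.lt_def] at hab' ⊢
      have h1 := hg1 a
      have h2 := hg1 b
      simp only [hjf]
      split_ifs <;> omega
    · intro a b
      have h1 := hw (jf a)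
      have h2 := hw (jf b)
      have h3 := hiff b a
      rw [key b, key a] at h3
      have hc := compl_pattern b a
      constructor
      · intro h; exact hc.mp (h3.mp (by omega))
      · intro h; have := h3.mpr (hc.mpr h); omega
  · rintro ⟨j, hj, hiff⟩
    have hglt : ∀ a : Fin 4, (if (j a : ℕ) = 0 then 0 else (j a : ℕ) + 1) < M + 1 := by
      intro a; have := (j a).isLt; split <;> omega
    set gf : Fin 4 → Fin (M+1) := fun a => ⟨if (j a : ℕ) = 0 then 0 else (j a : ℕ) + 1, hglt a⟩
      with hgf
    have key : ∀ a : Fin 4, u (gf a) = M + 1 - w (j a) := fun a => hrel (j a)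
    refine ⟨gf, ?_, ?_⟩
    · intro a b hab
      have hab' := hj hab
      rw [Fin.lt_def] at hab' ⊢
      simp only [hgf]
      split_ifs <;> omega
    · intro a b
      have h1 := hw (j a)
      have h2 := hw (j b)
      have h3 := hiff b a
      have hc := compl_pattern a b
      rw [key a, key b]
      constructor
      · intro h; exact hc.mpr (h3.mp (by omega))
      · intro h; have := h3.mpr (hc.mp h); omega

def Fmap (n : ℕ) (hn : 1 ≤ n) : (Fin (2 * n) → ℕ) → (Fin (2 * n + 1) → ℕ) :=
  fun w i =>
    if (i : ℕ) = 0 then 2 * n + 1 - w ⟨0, Nat.mul_pos Nat.two_pos hn⟩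
    else if (i : ℕ) = 1 then 2 * n + 1
    else 2 * n + 1 - w ⟨(i : ℕ) - 1, Nat.lt_of_le_of_lt (Nat.sub_le_sub_right (Nat.le_of_lt_succ i.isLt) 1)
      (Nat.sub_lt (Nat.mul_pos Nat.two_pos hn) Nat.one_pos)⟩

lemma Fmap_val (n : ℕ) (hn : 1 ≤ n) (w : Fin (2 * n) → ℕ) (k : ℕ) (hk : k < 2 * n + 1) :
    Fmap n hn w ⟨k, hk⟩ =
      if k = 1 then 2 * n + 1
      else 2 * n + 1 - w ⟨if k = 0 then 0 else k - 1, by split <;> omega⟩ := by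
  rcases k with _ | _ | k <;> rfl

lemma Fmap_rel (n : ℕ) (hn : 1 ≤ n) (w : Fin (2 * n) → ℕ) (j : Fin (2 * n)) :
    Fmap n hn w ⟨if (j : ℕ) = 0 then 0 else (j : ℕ) + 1, by have := j.isLt; split <;> omega⟩
      = 2 * n + 1 - w j := by
  obtain ⟨jv, hj⟩ := j
  by_cases hjv : jv = 0
  · subst hjv; rfl
  · simp only [if_neg hjv]
    rw [Fmap_val n hn w (jv + 1) (by omega), if_neg (show ¬jv + 1 = 1 by omega)]
    congr 1

def Gmap (n : ℕ) (hn : 1 ≤ n) (u : Fin (2 * n + 1) → ℕ) : Fin (2 * n) → ℕ :=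
  fun j => 2 * n + 1 - u ⟨if (j : ℕ) = 0 then 0 else (j : ℕ) + 1, by
    have := j.isLt; split <;> omega⟩

lemma Gmap_val (n : ℕ) (hn : 1 ≤ n) (u : Fin (2 * n + 1) → ℕ) (k : ℕ) (hk : k < 2 * n) :
    Gmap n hn u ⟨k, hk⟩ = 2 * n + 1 - u ⟨if k = 0 then 0 else k + 1, by split <;> omega⟩ := rfl


theorem stmt8 (n : ℕ) (hn : 1 ≤ n) :
    Set.BijOn
      (fun (w : Fin (2 * n) → ℕ) => fun (i : Fin (2 * n + 1)) =>
        if (i : ℕ) = 0 then 2 * n + 1 - w ⟨0, by omega⟩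
        else if (i : ℕ) = 1 then 2 * n + 1
        else 2 * n + 1 - w ⟨(i : ℕ) - 1, by have := i.isLt; omega⟩)
      (AvoidSet (2 * n) p4312)
      {u | u ∈ AvoidSet (2 * n + 1) p1243 ∧ u ⟨1, by omega⟩ = 2 * n + 1 ∧
        u ⟨2, by omega⟩ < u ⟨0, by omega⟩} := by
  show Set.BijOn (Fmap n hn) _ _
  have hM : 2 ≤ 2 * n := by omega
  refine ⟨?_, ?_, ?_⟩
  · -- MapsTo
    intro w hw
    obtain ⟨⟨hinj, hrange⟩, hud, hav⟩ := hw
    have hwb : ∀ j : Fin (2 * n), 1 ≤ w j ∧ w j ≤ 2 * n := by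
      intro j; have := hrange j; rwa [Finset.mem_Icc] at this
    have hudw : ∀ (a b : ℕ) (ha : a < 2 * n) (hb : b < 2 * n), a + 1 = b →
        (a % 2 = 0 → w ⟨a, ha⟩ < w ⟨b, hb⟩) ∧ (a % 2 = 1 → w ⟨b, hb⟩ < w ⟨a, ha⟩) := by
      intro a b ha hb hab; subst hab; exact hud a hb
    refine ⟨⟨⟨?_, ?_⟩, ?_, ?_⟩, ?_, ?_⟩
    · -- injective
      rintro ⟨iv, hi⟩ ⟨iv', hi'⟩ h
      rcases iv with _ | _ | a <;> rcases iv' with _ | _ | b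
      · exact Fin.ext rfl
      · have h' : 2 * n + 1 - w ⟨0, by omega⟩ = 2 * n + 1 := h
        exact absurd h' (by have := hwb ⟨0, by omega⟩; omega)
      · have h' : 2 * n + 1 - w ⟨0, by omega⟩ = 2 * n + 1 - w ⟨b + 1, by omega⟩ := h
        have b1 := hwb ⟨0, by omega⟩
        have b2 := hwb ⟨b + 1, by omega⟩
        have hww : w ⟨0, by omega⟩ = w ⟨b + 1, by omega⟩ := by omega
        have := congrArg Fin.val (hinj hww)
        exact absurd this (by simp)
      · have h' : (2 * n + 1 : ℕ) = 2 * n + 1 - w ⟨0, by omega⟩ := h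
        exact absurd h' (by have := hwb ⟨0, by omega⟩; omega)
      · exact Fin.ext rfl
      · have h' : (2 * n + 1 : ℕ) = 2 * n + 1 - w ⟨b + 1, by omega⟩ := h
        exact absurd h' (by have := hwb ⟨b + 1, by omega⟩; omega)
      · have h' : 2 * n + 1 - w ⟨a + 1, by omega⟩ = 2 * n + 1 - w ⟨0, by omega⟩ := h
        have b1 := hwb ⟨a + 1, by omega⟩
        have b2 := hwb ⟨0, by omega⟩
        have hww : w ⟨a + 1, by omega⟩ = w ⟨0, by omega⟩ := by omega
        have := congrArg Fin.val (hinj hww)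
        exact absurd this (by simp)
      · have h' : 2 * n + 1 - w ⟨a + 1, by omega⟩ = (2 * n + 1 : ℕ) := h
        exact absurd h' (by have := hwb ⟨a + 1, by omega⟩; omega)
      · have h' : 2 * n + 1 - w ⟨a + 1, by omega⟩ = 2 * n + 1 - w ⟨b + 1, by omega⟩ := h
        have b1 := hwb ⟨a + 1, by omega⟩
        have b2 := hwb ⟨b + 1, by omega⟩
        have hww : w ⟨a + 1, by omega⟩ = w ⟨b + 1, by omega⟩ := by omega
        have := congrArg Fin.val (hinj hww)
        simp only [Fin.val_mk] at this
        apply Fin.ext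
        show a + 2 = b + 2
        omega
    · -- range
      rintro ⟨iv, hi⟩
      rw [Finset.mem_Icc]
      rcases iv with _ | _ | a
      · show 1 ≤ 2 * n + 1 - w ⟨0, by omega⟩ ∧ 2 * n + 1 - w ⟨0, by omega⟩ ≤ 2 * n + 1
        have := hwb ⟨0, by omega⟩; omega
      · show 1 ≤ 2 * n + 1 ∧ 2 * n + 1 ≤ 2 * n + 1
        omega
      · show 1 ≤ 2 * n + 1 - w ⟨a + 1, by omega⟩ ∧
          2 * n + 1 - w ⟨a + 1, by omega⟩ ≤ 2 * n + 1
        have := hwb ⟨a + 1, by omega⟩; omega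
    · -- UpDown
      intro i hi
      rcases i with _ | _ | k
      · constructor
        · intro _
          show 2 * n + 1 - w ⟨0, by omega⟩ < 2 * n + 1
          have := hwb ⟨0, by omega⟩; omega
        · intro hp; omega
      · constructor
        · intro hp; omega
        · intro _
          show 2 * n + 1 - w ⟨1, by omega⟩ < 2 * n + 1
          have := hwb ⟨1, by omega⟩; omega
      · have hk1 : k + 1 < 2 * n := by omega
        have hk2 : k + 2 < 2 * n := by omega
        have h1 := hudw (k + 1) (k + 2) hk1 hk2 (by omega)
        have b1 := hwb ⟨k + 1, hk1⟩
        have b2 := hwb ⟨k + 2, hk2⟩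
        constructor
        · intro hp
          show 2 * n + 1 - w ⟨k + 1, hk1⟩ < 2 * n + 1 - w ⟨k + 2, hk2⟩
          have := h1.2 (by omega)
          omega
        · intro hp
          show 2 * n + 1 - w ⟨k + 2, hk2⟩ < 2 * n + 1 - w ⟨k + 1, hk1⟩
          have := h1.1 (by omega)
          omega
    · -- Avoids
      intro hc
      exact hav ((transfer (2 * n) hM w (Fmap n hn w) hwb (Fmap_rel n hn w) rfl).mp hc)
    · -- value at 1
      rfl
    · -- u 2 < u 0
      show 2 * n + 1 - w ⟨1, by omega⟩ < 2 * n + 1 - w ⟨0, by omega⟩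
      have b1 := hwb ⟨0, by omega⟩
      have b2 := hwb ⟨1, by omega⟩
      have h1 := (hudw 0 1 (by omega) (by omega) (by omega)).1 (by omega)
      omega
  · -- InjOn
    intro w hw w' hw' heq
    obtain ⟨⟨_, hrange⟩, _, _⟩ := hw
    obtain ⟨⟨_, hrange'⟩, _, _⟩ := hw'
    funext j
    have h3 := congrFun heq
      ⟨if (j : ℕ) = 0 then 0 else (j : ℕ) + 1, by have := j.isLt; split <;> omega⟩
    have e1 := Fmap_rel n hn w j
    have e2 := Fmap_rel n hn w' j
    have b1 := hrange j
    have b2 := hrange' j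
    rw [Finset.mem_Icc] at b1 b2
    omega
  · -- SurjOn
    intro u hu
    obtain ⟨⟨⟨huinj, hurange⟩, huud, huav⟩, hu1, hu20⟩ := hu
    have hub : ∀ (a : ℕ) (ha : a < 2 * n + 1), a ≠ 1 → 1 ≤ u ⟨a, ha⟩ ∧ u ⟨a, ha⟩ ≤ 2 * n := by
      intro a ha hne
      have h := hurange ⟨a, ha⟩
      rw [Finset.mem_Icc] at h
      refine ⟨h.1, ?_⟩
      by_cases he : u ⟨a, ha⟩ = 2 * n + 1
      · exfalso
        have heq2 : u ⟨a, ha⟩ = u ⟨1, by omega⟩ := by rw [he, hu1]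
        have := congrArg Fin.val (huinj heq2)
        simp only [Fin.val_mk] at this
        exact hne this
      · omega
    have huudw : ∀ (a b : ℕ) (ha : a < 2 * n + 1) (hb : b < 2 * n + 1), a + 1 = b →
        (a % 2 = 0 → u ⟨a, ha⟩ < u ⟨b, hb⟩) ∧ (a % 2 = 1 → u ⟨b, hb⟩ < u ⟨a, ha⟩) := by
      intro a b ha hb hab; subst hab; exact huud a hb
    have hgb : ∀ j : Fin (2 * n), 1 ≤ Gmap n hn u j ∧ Gmap n hn u j ≤ 2 * n := by
      rintro ⟨a, hA⟩
      rcases a with _ | a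
      · show 1 ≤ 2 * n + 1 - u ⟨0, by omega⟩ ∧ 2 * n + 1 - u ⟨0, by omega⟩ ≤ 2 * n
        have := hub 0 (by omega) (by omega); omega
      · show 1 ≤ 2 * n + 1 - u ⟨a + 2, by omega⟩ ∧ 2 * n + 1 - u ⟨a + 2, by omega⟩ ≤ 2 * n
        have := hub (a + 2) (by omega) (by omega); omega
    have hgrel : ∀ j : Fin (2 * n),
        u ⟨if (j : ℕ) = 0 then 0 else (j : ℕ) + 1, by have := j.isLt; split <;> omega⟩
          = 2 * n + 1 - Gmap n hn u j := by
      rintro ⟨a, hA⟩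
      rcases a with _ | a
      · show u ⟨0, by omega⟩ = 2 * n + 1 - (2 * n + 1 - u ⟨0, by omega⟩)
        have := hub 0 (by omega) (by omega); omega
      · show u ⟨a + 2, by omega⟩ = 2 * n + 1 - (2 * n + 1 - u ⟨a + 2, by omega⟩)
        have := hub (a + 2) (by omega) (by omega); omega
    refine ⟨Gmap n hn u, ⟨⟨?_, ?_⟩, ?_, ?_⟩, ?_⟩
    · -- injective
      rintro ⟨a, hA⟩ ⟨b, hB⟩ h
      rcases a with _ | a <;> rcases b with _ | b
      · exact Fin.ext rfl
      · have h' : 2 * n + 1 - u ⟨0, by omega⟩ = 2 * n + 1 - u ⟨b + 2, by omega⟩ := h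
        have b1 := hub 0 (by omega) (by omega)
        have b2 := hub (b + 2) (by omega) (by omega)
        have huu : u ⟨0, by omega⟩ = u ⟨b + 2, by omega⟩ := by omega
        have := congrArg Fin.val (huinj huu)
        exact absurd this (by simp)
      · have h' : 2 * n + 1 - u ⟨a + 2, by omega⟩ = 2 * n + 1 - u ⟨0, by omega⟩ := h
        have b1 := hub (a + 2) (by omega) (by omega)
        have b2 := hub 0 (by omega) (by omega)
        have huu : u ⟨a + 2, by omega⟩ = u ⟨0, by omega⟩ := by omega
        have := congrArg Fin.val (huinj huu)
        exact absurd this (by simp)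
      · have h' : 2 * n + 1 - u ⟨a + 2, by omega⟩ = 2 * n + 1 - u ⟨b + 2, by omega⟩ := h
        have b1 := hub (a + 2) (by omega) (by omega)
        have b2 := hub (b + 2) (by omega) (by omega)
        have huu : u ⟨a + 2, by omega⟩ = u ⟨b + 2, by omega⟩ := by omega
        have := congrArg Fin.val (huinj huu)
        simp only [Fin.val_mk] at this
        apply Fin.ext
        show a + 1 = b + 1
        omega
    · -- range
      intro j
      rw [Finset.mem_Icc]
      have := hgb j
      omega
    · -- UpDown
      intro i hi
      rcases i with _ | k
      · constructor
        · intro _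
          show 2 * n + 1 - u ⟨0, by omega⟩ < 2 * n + 1 - u ⟨2, by omega⟩
          have b1 := hub 0 (by omega) (by omega)
          have b2 := hub 2 (by omega) (by omega)
          have : u ⟨2, by omega⟩ < u ⟨0, by omega⟩ := hu20
          omega
        · intro hp; omega
      · have hk2 : k + 2 < 2 * n + 1 := by omega
        have hk3 : k + 3 < 2 * n + 1 := by omega
        have h1 := huudw (k + 2) (k + 3) hk2 hk3 (by omega)
        have b1 := hub (k + 2) (by omega) (by omega)
        have b2 := hub (k + 3) (by omega) (by omega)
        constructor
        · intro hp
          show 2 * n + 1 - u ⟨k + 2, by omega⟩ < 2 * n + 1 - u ⟨k + 3, by omega⟩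
          have := h1.2 (by omega)
          omega
        · intro hp
          show 2 * n + 1 - u ⟨k + 3, by omega⟩ < 2 * n + 1 - u ⟨k + 2, by omega⟩
          have := h1.1 (by omega)
          omega
    · -- Avoids
      intro hc
      exact huav ((transfer (2 * n) hM (Gmap n hn u) u hgb hgrel hu1).mpr hc)
    · -- Fmap ∘ Gmap = id
      funext i
      obtain ⟨a, hA⟩ := i
      rcases a with _ | _ | a
      · show 2 * n + 1 - (2 * n + 1 - u ⟨0, by omega⟩) = u ⟨0, hA⟩
        have := hub 0 (by omega) (by omega)
        omega
      · exact hu1.symm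
      · show 2 * n + 1 - (2 * n + 1 - u ⟨a + 2, by omega⟩) = u ⟨a + 2, hA⟩
        have := hub (a + 2) (by omega) (by omega)
        omega
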